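/- arXiv:2108.03724 — 3 statements merged into one kernel-verified Lean document; each statement's English description precedes it below -/
import Mathlib

section
/- Let m be a positive integer, let a_1, ..., a_m be complex numbers, and let r_1 < r_2 < ... < r_m be strictly increasing positive real numbers. If the sum Σ_{k=1}^m a_k e^{i r_k t} tends to 0 as t → ∞ (t real), then a_k = 0 for all k = 1, ..., m. -/
open Filter

/-- If `m ≥ 1`, `a₁, …, a_m ∈ ℂ`, `0 < r₁ < r₂ < ⋯ < r_m` are real, and
`∑_{k=1}^m a_k e^{i r_k t} → 0` as the real variable `t → ∞`, then all `a_k = 0`. -/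
theorem sum_complex_oscillations_tendsto_zero_imp_coeffs_zero
    (m : ℕ) (hm : 0 < m) (a : Fin m → ℂ) (r : Fin m → ℝ)
    (hrpos : ∀ k, 0 < r k) (hrmono : StrictMono r)
    (hlim : Tendsto (fun t : ℝ => ∑ k, a k * Complex.exp (Complex.I * (r k : ℂ) * (t : ℂ)))
      atTop (nhds 0)) :
    ∀ k, a k = 0 := by
  haveI : Nonempty (Fin m) := ⟨⟨0, hm⟩⟩
  obtain ⟨l, hl⟩ := Finite.exists_max r
  set s : ℝ := Real.pi / r l with hs
  have hspos : 0 < s := div_pos Real.pi_pos (hrpos l)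
  set x : Fin m → ℂ := fun k => Complex.exp (Complex.I * (r k : ℂ) * (s : ℂ)) with hx
  -- injectivity of x
  have key : ∀ i j : Fin m, i < j → x i ≠ x j := by
    intro i j hij heq
    have hlt : r i < r j := hrmono hij
    set d : ℝ := (r j - r i) * s with hd
    have hd0 : 0 < d := mul_pos (by linarith) hspos
    have hdpi : d < Real.pi := by
      have h1 : r j - r i < r l := by
        have := hrpos i
        have := hl j
        linarith
      calc d < r l * s := by
              exact mul_lt_mul_of_pos_right h1 hspos
        _ = Real.pi := by
              rw [hs, mul_comm, div_mul_cancel₀ _ (hrpos l).ne']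
    have h1 : Complex.exp ((d : ℂ) * Complex.I) = 1 := by
      have : (d : ℂ) * Complex.I =
          Complex.I * (r j : ℂ) * (s : ℂ) - Complex.I * (r i : ℂ) * (s : ℂ) := by
        push_cast [hd]
        ring
      have heq' : Complex.exp (Complex.I * (r i : ℂ) * (s : ℂ)) =
          Complex.exp (Complex.I * (r j : ℂ) * (s : ℂ)) := heq
      rw [this, Complex.exp_sub, ← heq', div_self (Complex.exp_ne_zero _)]
    obtain ⟨n, hn⟩ := Complex.exp_eq_one_iff.mp h1
    have hnr : d = (n : ℝ) * (2 * Real.pi) := by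
      have h2 : (d : ℂ) * Complex.I = ((n : ℂ) * (2 * Real.pi)) * Complex.I := by
        rw [hn]; ring
      have h3 := mul_right_cancel₀ Complex.I_ne_zero h2
      exact_mod_cast h3
    have hnpos : (0 : ℝ) < (n : ℝ) := by
      by_contra h
      push_neg at h
      nlinarith [Real.pi_pos]
    have : (1 : ℤ) ≤ n := by exact_mod_cast Int.cast_pos.mp (by exact_mod_cast hnpos) -- n > 0
    have : (1 : ℝ) ≤ (n : ℝ) := by exact_mod_cast this
    nlinarith [Real.pi_pos]
  have hxinj : Function.Injective x := by
    intro i j h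
    by_contra hne
    rcases lt_or_gt_of_ne hne with h' | h'
    · exact key i j h' h
    · exact key j i h' h.symm
  -- the Vandermonde matrix
  set M : Matrix (Fin m) (Fin m) ℂ := Matrix.transpose (Matrix.vandermonde x) with hM
  have hdet : M.det ≠ 0 := by
    rw [hM, Matrix.det_transpose]
    exact Matrix.det_vandermonde_ne_zero_iff.mpr hxinj
  have hunit : IsUnit M.det := isUnit_iff_ne_zero.mpr hdet
  set u : ℝ → Fin m → ℂ := fun t k => a k * Complex.exp (Complex.I * (r k : ℂ) * (t : ℂ))
    with hu
  set g : ℝ → Fin m → ℂ := fun t j => ∑ k, a k *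
      Complex.exp (Complex.I * (r k : ℂ) * ((t + (j : ℕ) * s : ℝ) : ℂ)) with hg
  have hMg : ∀ t : ℝ, M.mulVec (u t) = g t := by
    intro t
    funext j
    rw [Matrix.mulVec, dotProduct]
    simp only [hM, Matrix.transpose_apply, Matrix.vandermonde_apply, hu, hg, hx]
    refine Finset.sum_congr rfl fun k _ => ?_
    have harg : (Complex.I * (r k : ℂ) * ((t + (j : ℕ) * s : ℝ) : ℂ)) =
        ((j : ℕ) : ℂ) * (Complex.I * (r k : ℂ) * (s : ℂ)) + Complex.I * (r k : ℂ) * (t : ℂ) := by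
      push_cast; ring
    rw [harg, Complex.exp_add, Complex.exp_nat_mul]
    ring
  have hgtend : ∀ j : Fin m, Tendsto (fun t => g t j) atTop (nhds 0) := by
    intro j
    have hshift : Tendsto (fun t : ℝ => t + (j : ℕ) * s) atTop atTop :=
      tendsto_atTop_add_const_right atTop _ tendsto_id
    exact hlim.comp hshift
  have hueq : ∀ t : ℝ, u t = M⁻¹.mulVec (g t) := by
    intro t
    rw [← hMg t, Matrix.mulVec_mulVec, Matrix.nonsing_inv_mul M hunit, Matrix.one_mulVec]
  intro k
  have hutend : Tendsto (fun t => u t k) atTop (nhds 0) := by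
    have : ∀ t : ℝ, u t k = ∑ j, M⁻¹ k j * g t j := by
      intro t
      rw [hueq t, Matrix.mulVec, dotProduct]
    rw [funext this]
    have : Tendsto (fun t : ℝ => ∑ j : Fin m, M⁻¹ k j * g t j) atTop
        (nhds (∑ j : Fin m, M⁻¹ k j * 0)) := by
      exact tendsto_finset_sum _ fun j _ => (hgtend j).const_mul _
    simpa using this
  have hnorm : ∀ t : ℝ, ‖u t k‖ = ‖a k‖ := by
    intro t
    rw [hu]
    simp only [norm_mul]
    have : ‖Complex.exp (Complex.I * (r k : ℂ) * (t : ℂ))‖ = 1 := by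
      have harg : Complex.I * (r k : ℂ) * (t : ℂ) = ((r k * t : ℝ) : ℂ) * Complex.I := by
        push_cast; ring
      rw [harg, Complex.norm_exp_ofReal_mul_I]
    rw [this, mul_one]
  have : Tendsto (fun _ : ℝ => ‖a k‖) atTop (nhds 0) := by
    have := hutend.norm
    simpa [hnorm] using this
  have h0 : ‖a k‖ = 0 := tendsto_nhds_unique tendsto_const_nhds this
  exact norm_eq_zero.mp h0
end

section
/- Let X be a normed space over ℂ, let μ ∈ ℝ, let S be a finite subset of ℂ with Re λ = μ for every λ ∈ S, and let p_λ, q_λ : ℝ → X be polynomials for each λ ∈ S. Define g(t) = Σ_{λ∈S} p_λ(t) e^{λt} and h(t) = Σ_{λ∈S} q_λ(t) e^{λt} for t ∈ ℝ. If e^{-μt}(g(t) − h(t)) → 0 in X as t → ∞, then p_λ = q_λ for all λ ∈ S. -/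
open Filter
open Finset

/-- `p : ℝ → X` is an `X`-valued polynomial (with `X` a complex linear space). -/
def IsPolyFun {X : Type*} [AddCommGroup X] [Module ℂ X] (p : ℝ → X) : Prop :=
  ∃ (d : ℕ) (c : ℕ → X), ∀ t : ℝ, p t = ∑ j ∈ Finset.range (d + 1), ((t : ℂ) ^ j) • c j

lemma exp_ne_exp (μ : ℝ) (l l0 : ℂ) (hre : l.re = μ) (hre0 : l0.re = μ) (hne : l ≠ l0)
    (h : ℝ) (hpos : 0 < h) (hsmall : h * |l.im - l0.im| < 2 * Real.pi) :
    Complex.exp ((l - μ) * h) ≠ Complex.exp ((l0 - μ) * h) := by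
  intro hEq
  have h1 : Complex.exp ((l - μ) * h - (l0 - μ) * h) = 1 := by
    rw [Complex.exp_sub, hEq, div_self (Complex.exp_ne_zero _)]
  rw [Complex.exp_eq_one_iff] at h1
  obtain ⟨n, hn⟩ := h1
  have him : l.im ≠ l0.im := by
    intro he
    exact hne (Complex.ext (by simp [hre, hre0]) he)
  have key : (l - μ) * h - (l0 - μ) * h = (((l.im : ℂ) - l0.im) * h) * Complex.I := by
    have : l - (μ:ℂ) - (l0 - μ) = ((l.im : ℂ) - l0.im) * Complex.I := by
      apply Complex.ext <;> simp [hre, hre0]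
    rw [← sub_mul, this]; ring
  rw [key] at hn
  have hn2 : ((l.im:ℂ) - l0.im) * h * Complex.I = ((n:ℂ) * (2 * Real.pi)) * Complex.I := by
    rw [hn]; ring
  have hc := mul_right_cancel₀ Complex.I_ne_zero hn2
  have hr : (l.im - l0.im) * h = n * (2 * Real.pi) := by exact_mod_cast hc
  rcases eq_or_ne n 0 with h0 | h0
  · rw [h0] at hr
    simp at hr
    rcases hr with hr | hr
    · exact him (by linarith)
    · linarith
  · have hone : (1:ℝ) ≤ |(n:ℝ)| := by exact_mod_cast Int.one_le_abs h0
    have h3 : |l.im - l0.im| * h = |(n:ℝ)| * (2 * Real.pi) := by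
      rw [← abs_of_pos hpos, ← abs_mul, hr, abs_mul,
        abs_of_pos (by positivity : (0:ℝ) < 2 * Real.pi)]
    nlinarith [Real.pi_pos, abs_nonneg (l.im - l0.im)]

lemma lemA {X : Type*} [NormedAddCommGroup X] [NormedSpace ℂ X] (μ : ℝ) :
    ∀ (n : ℕ) (S : Finset ℂ), S.card = n → (∀ l ∈ S, l.re = μ) → ∀ (c : ℂ → X),
    Tendsto (fun t : ℝ => ∑ l ∈ S, Complex.exp ((l - μ) * t) • c l) atTop (nhds 0) →
    ∀ l ∈ S, c l = 0 := by
  intro n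
  induction n with
  | zero => intro S hcard _ c _ l hl; simp [Finset.card_eq_zero.mp hcard] at hl
  | succ n ih =>
    intro S hcard hS c hlim l0 hl0
    set B : ℝ := ∑ l ∈ S, |l.im| with hB
    have hBnn : 0 ≤ B := Finset.sum_nonneg fun _ _ => abs_nonneg _
    set h : ℝ := Real.pi / (1 + 2 * B) with hh
    have hpos : 0 < h := by rw [hh]; positivity
    have hbound : ∀ l ∈ S, h * |l.im - l0.im| < 2 * Real.pi := by
      intro l hl
      have h1 : |l.im - l0.im| ≤ 2 * B := by
        have e1 : |l.im| ≤ B :=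
          Finset.single_le_sum (f := fun l : ℂ => |l.im|) (fun _ _ => abs_nonneg _) hl
        have e2 : |l0.im| ≤ B :=
          Finset.single_le_sum (f := fun l : ℂ => |l.im|) (fun _ _ => abs_nonneg _) hl0
        calc |l.im - l0.im| ≤ |l.im| + |l0.im| := abs_sub _ _
          _ ≤ 2 * B := by linarith
      have hd : (0:ℝ) < 1 + 2 * B := by linarith
      rw [hh, div_mul_eq_mul_div, div_lt_iff₀ hd]
      nlinarith [Real.pi_pos]
    -- difference operator
    set f : ℝ → X := fun t => ∑ l ∈ S, Complex.exp ((l - μ) * t) • c l with hf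
    have hshift : Tendsto (fun t => f (t + h)) atTop (nhds 0) :=
      hlim.comp (Filter.tendsto_atTop_add_const_right _ h tendsto_id)
    have hΔlim : Tendsto (fun t => f (t + h) - Complex.exp ((l0 - μ) * h) • f t)
        atTop (nhds 0) := by
      have := hshift.sub ((hlim.const_smul (Complex.exp ((l0 - μ) * h))))
      simpa using this
    have hΔeq : ∀ t : ℝ, f (t + h) - Complex.exp ((l0 - μ) * h) • f t
        = ∑ l ∈ S.erase l0, Complex.exp ((l - μ) * t) •
            ((Complex.exp ((l - μ) * h) - Complex.exp ((l0 - μ) * h)) • c l) := by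
      intro t
      have e1 : ∀ l ∈ S, Complex.exp ((l - μ) * (t + h)) • c l
          - Complex.exp ((l0 - μ) * h) • (Complex.exp ((l - μ) * t) • c l)
          = Complex.exp ((l - μ) * t) •
            ((Complex.exp ((l - μ) * h) - Complex.exp ((l0 - μ) * h)) • c l) := by
        intro l _
        rw [smul_smul, smul_smul, ← sub_smul]
        congr 1
        rw [mul_add, Complex.exp_add]
        ring
      rw [hf]
      push_cast [Finset.smul_sum, ← Finset.sum_sub_distrib]
      rw [Finset.sum_congr rfl e1]
      rw [← Finset.sum_erase_add _ _ hl0]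
      simp
    rw [funext hΔeq] at hΔlim
    have hcard' : (S.erase l0).card = n := by
      rw [Finset.card_erase_of_mem hl0, hcard]; rfl
    have hzero := ih (S.erase l0) hcard' (fun l hl => hS l (Finset.mem_of_mem_erase hl)) _ hΔlim
    -- coefficients on erase vanish
    have hcS : ∀ l ∈ S, l ≠ l0 → c l = 0 := by
      intro l hl hne
      have hmem : l ∈ S.erase l0 := Finset.mem_erase.mpr ⟨hne, hl⟩
      have := hzero l hmem
      have hne2 : Complex.exp ((l - μ) * h) - Complex.exp ((l0 - μ) * h) ≠ 0 :=
        sub_ne_zero.mpr (exp_ne_exp μ l l0 (hS l hl) (hS l0 hl0) hne h hpos (hbound l hl))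
      exact (smul_eq_zero.mp this).resolve_left hne2
    -- now f t = exp((l0-μ)t) • c l0
    have hfeq : ∀ t : ℝ, f t = Complex.exp ((l0 - μ) * t) • c l0 := by
      intro t
      show (∑ l ∈ S, Complex.exp ((l - (μ:ℂ)) * t) • c l) = _
      rw [← Finset.sum_erase_add _ _ hl0]
      have : ∀ l ∈ S.erase l0, Complex.exp ((l - μ) * t) • c l = 0 := by
        intro l hl
        rw [hcS l (Finset.mem_of_mem_erase hl) (Finset.ne_of_mem_erase hl), smul_zero]
      rw [Finset.sum_congr rfl this]
      simp
    have hnorm : Tendsto (fun _ : ℝ => ‖c l0‖) atTop (nhds 0) := by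
      have := tendsto_zero_iff_norm_tendsto_zero.mp hlim
      apply this.congr
      intro t
      rw [hfeq t, norm_smul, Complex.norm_exp]
      have : ((l0 - μ) * t).re = 0 := by
        simp [Complex.sub_re, hS l0 hl0]
      rw [this, Real.exp_zero, one_mul]
    have := tendsto_nhds_unique hnorm tendsto_const_nhds
    exact norm_eq_zero.mp this.symm

lemma lemB {X : Type*} [NormedAddCommGroup X] [NormedSpace ℂ X] (μ : ℝ) :
    ∀ (d : ℕ) (S : Finset ℂ), (∀ l ∈ S, l.re = μ) → ∀ (c : ℂ → ℕ → X),
    Tendsto (fun t : ℝ => ∑ l ∈ S, Complex.exp ((l - μ) * t) •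
      ∑ j ∈ Finset.range (d + 1), ((t:ℂ)^j) • c l j) atTop (nhds 0) →
    ∀ l ∈ S, ∀ j < d + 1, c l j = 0 := by
  intro d
  induction d with
  | zero =>
    intro S hS c hlim l hl j hj
    interval_cases j
    refine lemA μ S.card S rfl hS (fun l => c l 0) ?_ l hl
    apply hlim.congr
    intro t
    simp
  | succ d ih =>
    intro S hS c hlim l0 hl0
    set f : ℝ → X := fun t => ∑ l ∈ S, Complex.exp ((l - μ) * t) •
      ∑ j ∈ Finset.range (d + 2), ((t:ℂ)^j) • c l j with hfdef
    have hnormexp : ∀ l ∈ S, ∀ t : ℝ, ‖Complex.exp ((l - μ) * t)‖ = 1 := by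
      intro l hl t
      rw [Complex.norm_exp]
      have : ((l - (μ:ℂ)) * t).re = 0 := by simp [Complex.sub_re, hS l hl]
      rw [this, Real.exp_zero]
    -- u → 0
    have hu : Tendsto (fun t : ℝ => (((t:ℂ)^(d+1))⁻¹) • f t) atTop (nhds 0) := by
      apply squeeze_zero_norm' (a := fun t => ‖f t‖)
      · filter_upwards [Filter.eventually_ge_atTop (1:ℝ)] with t ht
        rw [norm_smul]
        have h1 : ‖((t:ℂ)^(d+1))⁻¹‖ ≤ 1 := by
          rw [norm_inv, norm_pow, Complex.norm_real, Real.norm_eq_abs,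
            abs_of_pos (by linarith : (0:ℝ) < t)]
          rw [inv_le_one_iff₀]
          right
          exact one_le_pow₀ ht
        nlinarith [norm_nonneg (f t), norm_nonneg (((t:ℂ)^(d+1))⁻¹)]
      · exact tendsto_zero_iff_norm_tendsto_zero.mp hlim
    -- w → 0
    set w : ℝ → X := fun t => ∑ l ∈ S, Complex.exp ((l - μ) * t) •
      ∑ j ∈ Finset.range (d + 1), (((t:ℂ)^j) * ((t:ℂ)^(d+1))⁻¹) • c l j with hwdef
    have hw : Tendsto w atTop (nhds 0) := by
      rw [hwdef]
      have : (0:X) = ∑ l ∈ S, (0:X) := by simp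
      rw [this]
      apply tendsto_finset_sum
      intro l hl
      have : (0:X) = ∑ j ∈ Finset.range (d+1), (0:X) := by simp
      rw [this]
      have hkey : Tendsto (fun t : ℝ => ∑ j ∈ Finset.range (d+1),
          Complex.exp ((l - μ) * t) • ((((t:ℂ)^j) * ((t:ℂ)^(d+1))⁻¹) • c l j)) atTop
          (nhds (∑ j ∈ Finset.range (d+1), (0:X))) := by
        apply tendsto_finset_sum
        intro j hj
        have hjd : j + 1 ≤ d + 1 := Finset.mem_range.mp hj
        apply squeeze_zero_norm' (a := fun t : ℝ => t⁻¹ * ‖c l j‖)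
        · filter_upwards [Filter.eventually_ge_atTop (1:ℝ)] with t ht
          have htpos : (0:ℝ) < t := by linarith
          rw [norm_smul, hnormexp l hl t, one_mul, norm_smul]
          have h2 : ‖((t:ℂ)^j) * ((t:ℂ)^(d+1))⁻¹‖ ≤ t⁻¹ := by
            rw [norm_mul, norm_inv, norm_pow, norm_pow, Complex.norm_real,
              Real.norm_eq_abs, abs_of_pos htpos]
            have hpow : t ^ j * t ≤ t ^ (d + 1) := by
              calc t ^ j * t = t ^ (j + 1) := by ring
                _ ≤ t ^ (d + 1) := pow_le_pow_right₀ ht hjd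
            rw [← div_eq_mul_inv, inv_eq_one_div,
              div_le_div_iff₀ (by positivity) htpos, one_mul]
            exact hpow
          exact mul_le_mul_of_nonneg_right h2 (norm_nonneg _)
        · have h := (tendsto_inv_atTop_zero (𝕜 := ℝ)).mul_const ‖c l j‖
          simpa using h
      exact hkey.congr (fun t => (Finset.smul_sum).symm)
    -- identify u - w with the top-coefficient sum
    have key : ∀ t : ℝ, (1:ℝ) ≤ t → (((t:ℂ)^(d+1))⁻¹) • f t - w t
        = ∑ l ∈ S, Complex.exp ((l - μ) * t) • c l (d+1) := by
      intro t ht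
      have htne : ((t:ℂ))^(d+1) ≠ 0 := by
        apply pow_ne_zero
        exact_mod_cast (by linarith : (0:ℝ) < t).ne'
      show (((t:ℂ)^(d+1))⁻¹) • (∑ l ∈ S, Complex.exp ((l - μ) * t) •
          ∑ j ∈ Finset.range (d + 2), ((t:ℂ)^j) • c l j)
        - (∑ l ∈ S, Complex.exp ((l - μ) * t) •
          ∑ j ∈ Finset.range (d + 1), (((t:ℂ)^j) * ((t:ℂ)^(d+1))⁻¹) • c l j) = _
      rw [Finset.smul_sum, ← Finset.sum_sub_distrib]
      apply Finset.sum_congr rfl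
      intro l hl
      rw [smul_comm, ← smul_sub]
      congr 1
      rw [Finset.smul_sum, Finset.sum_range_succ]
      simp only [smul_smul]
      have hcoef : ∀ j : ℕ, ((t:ℂ)^(d+1))⁻¹ * (t:ℂ)^j = ((t:ℂ)^j) * ((t:ℂ)^(d+1))⁻¹ :=
        fun j => mul_comm _ _
      simp only [hcoef]
      rw [mul_inv_cancel₀ htne, one_smul, add_sub_cancel_left]
    have hv : Tendsto (fun t : ℝ => ∑ l ∈ S, Complex.exp ((l - μ) * t) • c l (d+1))
        atTop (nhds 0) := by
      have hsub : Tendsto (fun t : ℝ => (((t:ℂ)^(d+1))⁻¹) • f t - w t) atTop (nhds 0) := by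
        simpa using hu.sub hw
      apply hsub.congr'
      filter_upwards [Filter.eventually_ge_atTop (1:ℝ)] with t ht
      exact key t ht
    have htop : ∀ l ∈ S, c l (d+1) = 0 :=
      lemA μ S.card S rfl hS (fun l => c l (d+1)) hv
    have hred : Tendsto (fun t : ℝ => ∑ l ∈ S, Complex.exp ((l - μ) * t) •
        ∑ j ∈ Finset.range (d + 1), ((t:ℂ)^j) • c l j) atTop (nhds 0) := by
      apply hlim.congr
      intro t
      apply Finset.sum_congr rfl
      intro l hl
      rw [Finset.sum_range_succ, htop l hl, smul_zero, add_zero]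
    have hIH := ih S hS c hred
    intro j hj
    rcases Nat.lt_succ_iff_lt_or_eq.mp hj with hlt | rfl
    · exact hIH l0 hl0 j hlt
    · exact htop l0 hl0

lemma pad_poly {X : Type*} [AddCommGroup X] [Module ℂ X] (r : ℝ → X) (d D : ℕ) (hdD : d ≤ D)
    (c : ℕ → X) (hc : ∀ t, r t = ∑ j ∈ Finset.range (d+1), ((t:ℂ)^j) • c j) :
    ∀ t, r t = ∑ j ∈ Finset.range (D+1), ((t:ℂ)^j) • (if j < d+1 then c j else 0) := by
  intro t
  rw [hc t]
  rw [← Finset.sum_subset (Finset.range_subset_range.mpr (by omega : d+1 ≤ D+1))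
    (fun x _ hx => by rw [if_neg (by simpa using hx), smul_zero])]
  apply Finset.sum_congr rfl
  intro j hj
  rw [if_pos (Finset.mem_range.mp hj)]

/-- Lemma `uniE`. Let `X` be a complex normed space, `μ ∈ ℝ`, `S ⊆ ℂ` a finite
set with `Re λ = μ` for all `λ ∈ S`, and `p_λ, q_λ : ℝ → X` polynomials.  If
`g(t) = ∑_{λ∈S} p_λ(t) e^{λ t}`, `h(t) = ∑_{λ∈S} q_λ(t) e^{λ t}`, and
`e^{-μ t}(g(t) - h(t)) → 0` as `t → ∞`, then `p_λ = q_λ` for all `λ ∈ S`. -/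
theorem uniqueness_in_FE_class
    {X : Type*} [NormedAddCommGroup X] [NormedSpace ℂ X]
    (μ : ℝ) (S : Finset ℂ) (hS : ∀ l ∈ S, l.re = μ)
    (p q : ℂ → ℝ → X)
    (hp : ∀ l ∈ S, IsPolyFun (p l)) (hq : ∀ l ∈ S, IsPolyFun (q l))
    (g h : ℝ → X)
    (hg : ∀ t : ℝ, g t = ∑ l ∈ S, Complex.exp (l * t) • p l t)
    (hh : ∀ t : ℝ, h t = ∑ l ∈ S, Complex.exp (l * t) • q l t)
    (hlim : Tendsto (fun t : ℝ => ((Real.exp (-μ * t) : ℂ)) • (g t - h t)) atTop (nhds 0)) :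
    ∀ l ∈ S, ∀ t : ℝ, p l t = q l t := by
  classical
  set r : ℂ → ℝ → X := fun l t => if l ∈ S then p l t - q l t else 0 with hrdef
  have hr : ∀ l : ℂ, ∃ (d : ℕ) (cc : ℕ → X), ∀ t : ℝ,
      r l t = ∑ j ∈ Finset.range (d+1), ((t:ℂ)^j) • cc j := by
    intro l
    by_cases hl : l ∈ S
    · obtain ⟨dp, a, ha⟩ := hp l hl
      obtain ⟨dq, b, hb⟩ := hq l hl
      refine ⟨max dp dq, fun j => (if j < dp+1 then a j else 0) - (if j < dq+1 then b j else 0),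
        fun t => ?_⟩
      have ha' := pad_poly (p l) dp (max dp dq) (le_max_left _ _) a ha t
      have hb' := pad_poly (q l) dq (max dp dq) (le_max_right _ _) b hb t
      simp only [hrdef, if_pos hl]
      rw [ha', hb', ← Finset.sum_sub_distrib]
      apply Finset.sum_congr rfl
      intro j _
      rw [smul_sub]
    · exact ⟨0, fun _ => 0, fun t => by simp [hrdef, hl]⟩
  choose d cc hcc using hr
  set D : ℕ := S.sup d with hD
  set c' : ℂ → ℕ → X := fun l j => if j < d l + 1 then cc l j else 0 with hc'
  have hpad : ∀ l ∈ S, ∀ t : ℝ, r l t = ∑ j ∈ Finset.range (D+1), ((t:ℂ)^j) • c' l j := by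
    intro l hl t
    exact pad_poly (r l) (d l) D (Finset.le_sup hl) (cc l) (hcc l) t
  have hlim2 : Tendsto (fun t : ℝ => ∑ l ∈ S, Complex.exp ((l - μ) * t) •
      ∑ j ∈ Finset.range (D+1), ((t:ℂ)^j) • c' l j) atTop (nhds 0) := by
    apply hlim.congr
    intro t
    rw [hg t, hh t, ← Finset.sum_sub_distrib, Finset.smul_sum]
    apply Finset.sum_congr rfl
    intro l hl
    rw [← smul_sub, smul_smul, ← hpad l hl t]
    have hexp : ((Real.exp (-μ * t) : ℝ) : ℂ) * Complex.exp (l * t)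
        = Complex.exp ((l - μ) * t) := by
      rw [Complex.ofReal_exp, ← Complex.exp_add]
      congr 1
      push_cast
      ring
    rw [hexp, hrdef]
    simp [hl]
  have hzero := lemB μ D S hS c' hlim2
  intro l hl t
  have : r l t = 0 := by
    rw [hpad l hl t]
    apply Finset.sum_eq_zero
    intro j hj
    rw [hzero l hl j (Finset.mem_range.mp hj), smul_zero]
  rw [hrdef] at this
  simp only [if_pos hl] at this
  exact sub_eq_zero.mp this
end

section
/- Let m ∈ ℤ₊ and λ > 0, γ > 0 be given. For any number T_* > E_m(0), there exists a number C > 0 such that ∫₀ᵗ e^{−γ(t−τ)} L_m(T_* + τ)^{−λ} dτ ≤ C · L_m(T_* + t)^{−λ} for all t ≥ 0. -/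
noncomputable section

/-- Iterated exponential: `EE m` is `E_m` (`E_0(t) = t`, `E_{m+1}(t) = exp (E_m t)`). -/
def EE : ℕ → ℝ → ℝ
  | 0 => fun t => t
  | m + 1 => fun t => Real.exp (EE m t)

/-- Iterated logarithm: `LL m` is `L_m` (`L_0(t) = t`, `L_{m+1}(t) = ln (L_m t)`). -/
def LL : ℕ → ℝ → ℝ
  | 0 => fun t => t
  | m + 1 => fun t => Real.log (LL m t)

lemma EE_lt_EE_succ (m : ℕ) : EE m 0 < EE (m + 1) 0 := by
  show EE m 0 < Real.exp (EE m 0)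
  have := Real.add_one_le_exp (EE m 0)
  linarith

lemma LL_lt (k j : ℕ) (s : ℝ) (h : EE (j + k) 0 < s) : EE j 0 < LL k s := by
  induction k generalizing j with
  | zero => simpa [LL] using h
  | succ k ih =>
    have h' : EE (j + 1) 0 < LL k s := ih (j + 1) (by rwa [show j + 1 + k = j + (k + 1) by omega])
    have h'' : Real.exp (EE j 0) < LL k s := by simpa [EE] using h'
    have hpos : 0 < LL k s := (Real.exp_pos _).trans h''
    show EE j 0 < Real.log (LL k s)
    exact (Real.lt_log_iff_exp_lt hpos).2 h''

lemma LL_pos (m : ℕ) {s : ℝ} (h : EE m 0 < s) : 0 < LL m s := by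
  have := LL_lt m 0 s (by simpa using h)
  simpa [EE] using this

lemma LL_one_lt (m : ℕ) {s : ℝ} (h : EE (m + 1) 0 < s) : 1 < LL m s := by
  have := LL_lt m 1 s (by rwa [show 1 + m = m + 1 by omega])
  simpa [EE] using this

lemma LL_mono (m : ℕ) {s s' : ℝ} (hs : EE m 0 < s) (h : s ≤ s') : LL m s ≤ LL m s' := by
  induction m with
  | zero => simpa [LL]
  | succ m ih =>
    have hm : EE m 0 < s := (EE_lt_EE_succ m).trans hs
    show Real.log (LL m s) ≤ Real.log (LL m s')
    exact Real.log_le_log (LL_pos m hm) (ih hm)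

lemma LL_sub_le (m : ℕ) {s s' : ℝ} (hs : EE (m) 0 < s) (h : s ≤ s') :
    LL m s' - LL m s ≤ s' - s := by
  induction m with
  | zero => simp [LL]
  | succ m ih =>
    have hm : EE m 0 < s := (EE_lt_EE_succ m).trans hs
    have h1 : 1 < LL m s := LL_one_lt m hs
    have h0 : 0 < LL m s := by linarith
    have hmono : LL m s ≤ LL m s' := LL_mono m hm h
    have h0' : 0 < LL m s' := lt_of_lt_of_le h0 hmono
    show Real.log (LL m s') - Real.log (LL m s) ≤ s' - s
    have e1 : Real.log (LL m s') - Real.log (LL m s) = Real.log (LL m s' / LL m s) :=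
      (Real.log_div (ne_of_gt h0') (ne_of_gt h0)).symm
    have h2 : Real.log (LL m s' / LL m s) ≤ LL m s' / LL m s - 1 :=
      Real.log_le_sub_one_of_pos (div_pos h0' h0)
    have h3 : LL m s' / LL m s - 1 = (LL m s' - LL m s) / LL m s := by field_simp
    have h4 : (LL m s' - LL m s) / LL m s ≤ LL m s' - LL m s :=
      div_le_self (by linarith) (le_of_lt h1)
    have h5 := ih hm
    linarith [e1 ▸ h2, h3 ▸ h2]

lemma LL_contOn (m : ℕ) : ContinuousOn (LL m) {s : ℝ | EE m 0 < s} := by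
  induction m with
  | zero => simpa [LL] using (continuous_id' : Continuous fun t : ℝ => t).continuousOn
  | succ m ih =>
    have hsub : {s : ℝ | EE (m + 1) 0 < s} ⊆ {s | EE m 0 < s} :=
      fun s hs => (EE_lt_EE_succ m).trans hs
    show ContinuousOn (fun s => Real.log (LL m s)) _
    exact ContinuousOn.log (ih.mono hsub) (fun x hx => ne_of_gt (LL_pos m (hsub hx)))

/-- Lemma 2.5 of [CaH3].  For `m ∈ ℤ₊`, `λ, γ > 0` and `T_* > E_m(0)`
there is `C > 0` with
`∫₀ᵗ e^{-γ(t-τ)} L_m(T_* + τ)^{-λ} dτ ≤ C L_m(T_* + t)^{-λ}` for all `t ≥ 0`. -/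
theorem integral_iterated_log_decay_bound
    (m : ℕ) (lam gam : ℝ) (hlam : 0 < lam) (hgam : 0 < gam)
    (Tstar : ℝ) (hT : EE m 0 < Tstar) :
    ∃ C > 0, ∀ t ≥ (0 : ℝ),
      (∫ τ in (0:ℝ)..t, Real.exp (-gam * (t - τ)) * LL m (Tstar + τ) ^ (-lam))
        ≤ C * LL m (Tstar + t) ^ (-lam) := by
  set n : ℕ := ⌈lam⌉₊ with hn
  have hn0 : 0 < n := Nat.ceil_pos.2 hlam
  set δ : ℝ := LL m Tstar with hδdef
  have hδ : 0 < δ := LL_pos m hT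
  set c : ℝ := gam / (4 * n) with hc
  have hcpos : 0 < c := by positivity
  set B : ℝ := 1 + 1 / (c * δ) with hB
  have hB1 : (1 : ℝ) ≤ B := by
    have : 0 ≤ 1 / (c * δ) := by positivity
    simp only [hB]; linarith
  have hBpos : 0 < B := lt_of_lt_of_le zero_lt_one hB1
  set K : ℝ := B ^ n with hK
  have hKpos : 0 < K := pow_pos hBpos n
  -- key elementary estimate
  have key : ∀ u : ℝ, 0 ≤ u → (1 + u / δ) ^ lam ≤ K * Real.exp (gam / 2 * u) := by
    intro u hu
    have huδ : 0 ≤ u / δ := by positivity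
    have hbase : (1 : ℝ) ≤ 1 + u / δ := by linarith
    have e1 : c * u ≤ Real.exp (c * u) := by
      have := Real.add_one_le_exp (c * u); linarith
    have e2 : (1 : ℝ) ≤ Real.exp (c * u) := Real.one_le_exp (by positivity)
    have step1 : 1 + u / δ ≤ B * Real.exp (c * u) := by
      have h3 : u / δ = (c * u) / (c * δ) := by
        rw [mul_div_mul_left _ _ (ne_of_gt hcpos)]
      have h4 : (c * u) / (c * δ) ≤ Real.exp (c * u) / (c * δ) :=
        div_le_div_of_nonneg_right e1 (by positivity)
      have h5 : B * Real.exp (c * u) = Real.exp (c * u) + Real.exp (c * u) / (c * δ) := by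
        rw [hB]; ring
      rw [h5, h3]; linarith
    have step2 : (1 + u / δ) ^ lam ≤ (1 + u / δ) ^ (n : ℕ) := by
      rw [← Real.rpow_natCast]
      exact Real.rpow_le_rpow_of_exponent_le hbase (Nat.le_ceil lam)
    have step3 : (1 + u / δ) ^ n ≤ (B * Real.exp (c * u)) ^ n :=
      pow_le_pow_left₀ (by linarith) step1 n
    have step4 : (B * Real.exp (c * u)) ^ n = K * Real.exp ((n : ℝ) * (c * u)) := by
      rw [mul_pow, ← Real.exp_nat_mul, hK]
    have step5 : (n : ℝ) * (c * u) ≤ gam / 2 * u := by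
      have hne : (n : ℝ) ≠ 0 := Nat.cast_ne_zero.2 hn0.ne'
      have hnc : (n : ℝ) * c = gam / 4 := by
        rw [hc]; field_simp
      have : (n : ℝ) * (c * u) = gam / 4 * u := by rw [← mul_assoc, hnc]
      rw [this]; nlinarith
    calc (1 + u / δ) ^ lam ≤ (1 + u / δ) ^ (n : ℕ) := step2
      _ ≤ (B * Real.exp (c * u)) ^ n := step3
      _ = K * Real.exp ((n : ℝ) * (c * u)) := step4
      _ ≤ K * Real.exp (gam / 2 * u) :=
          mul_le_mul_of_nonneg_left (Real.exp_le_exp.2 step5) hKpos.le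
  refine ⟨K * (2 / gam), by positivity, ?_⟩
  intro t ht
  have hat : EE m 0 < Tstar + t := by linarith
  set a : ℝ := LL m (Tstar + t) with ha
  have ha0 : 0 < a := LL_pos m hat
  have hal : 0 < a ^ lam := Real.rpow_pos_of_pos ha0 lam
  -- pointwise bound
  have hpt : ∀ τ ∈ Set.Icc (0 : ℝ) t,
      Real.exp (-gam * (t - τ)) * LL m (Tstar + τ) ^ (-lam)
        ≤ K * a ^ (-lam) * Real.exp (-(gam / 2) * (t - τ)) := by
    intro τ hτ
    obtain ⟨hτ0, hτt⟩ := hτ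
    have hsτ : EE m 0 < Tstar + τ := by linarith
    have hb0 : 0 < LL m (Tstar + τ) := LL_pos m hsτ
    set b : ℝ := LL m (Tstar + τ) with hbdef
    have hbδ : δ ≤ b := LL_mono m hT (by linarith)
    have hu0 : (0 : ℝ) ≤ t - τ := by linarith
    have hab : a ≤ b + (t - τ) := by
      have := LL_sub_le m hsτ (show Tstar + τ ≤ Tstar + t by linarith)
      simp only [← ha, ← hbdef] at this
      linarith
    have hbu : b + (t - τ) ≤ b * (1 + (t - τ) / δ) := by
      have h6 : t - τ ≤ b * ((t - τ) / δ) := by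
        calc t - τ = δ * ((t - τ) / δ) := by field_simp
          _ ≤ b * ((t - τ) / δ) := mul_le_mul_of_nonneg_right hbδ (by positivity)
      have h7 : b * (1 + (t - τ) / δ) = b + b * ((t - τ) / δ) := by ring
      linarith
    have halam : a ^ lam ≤ b ^ lam * (K * Real.exp (gam / 2 * (t - τ))) := by
      calc a ^ lam ≤ (b * (1 + (t - τ) / δ)) ^ lam :=
            Real.rpow_le_rpow ha0.le (hab.trans hbu) hlam.le
        _ = b ^ lam * (1 + (t - τ) / δ) ^ lam := Real.mul_rpow hb0.le (by positivity)
        _ ≤ b ^ lam * (K * Real.exp (gam / 2 * (t - τ))) :=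
            mul_le_mul_of_nonneg_left (key (t - τ) hu0) (Real.rpow_nonneg hb0.le lam)
    have hbl : 0 < b ^ lam := Real.rpow_pos_of_pos hb0 lam
    have hexpeq : -gam * (t - τ) + gam / 2 * (t - τ) = -(gam / 2) * (t - τ) := by ring
    have hkey2 : Real.exp (-gam * (t - τ)) * a ^ lam
        ≤ K * Real.exp (-(gam / 2) * (t - τ)) * b ^ lam := by
      calc Real.exp (-gam * (t - τ)) * a ^ lam
          ≤ Real.exp (-gam * (t - τ)) * (b ^ lam * (K * Real.exp (gam / 2 * (t - τ)))) :=
            mul_le_mul_of_nonneg_left halam (Real.exp_nonneg _)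
        _ = K * (Real.exp (-gam * (t - τ)) * Real.exp (gam / 2 * (t - τ))) * b ^ lam := by ring
        _ = K * Real.exp (-(gam / 2) * (t - τ)) * b ^ lam := by
            rw [← Real.exp_add, hexpeq]
    rw [Real.rpow_neg hb0.le, Real.rpow_neg ha0.le]
    calc Real.exp (-gam * (t - τ)) * (b ^ lam)⁻¹
        = Real.exp (-gam * (t - τ)) / b ^ lam := by rw [div_eq_mul_inv]
      _ ≤ (K * Real.exp (-(gam / 2) * (t - τ))) / a ^ lam :=
          (div_le_div_iff₀ hbl hal).2 hkey2
      _ = K * (a ^ lam)⁻¹ * Real.exp (-(gam / 2) * (t - τ)) := by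
          rw [div_eq_mul_inv]; ring
  -- integrability
  have huIcc : Set.uIcc (0 : ℝ) t = Set.Icc 0 t := Set.uIcc_of_le ht
  have hLLcont : ContinuousOn (fun τ : ℝ => LL m (Tstar + τ)) (Set.uIcc 0 t) := by
    rw [huIcc]
    apply (LL_contOn m).comp ((continuous_const.add continuous_id).continuousOn)
    intro τ hτ
    exact show EE m 0 < Tstar + τ by have := hτ.1; linarith
  have hfcont : ContinuousOn
      (fun τ : ℝ => Real.exp (-gam * (t - τ)) * LL m (Tstar + τ) ^ (-lam))
      (Set.uIcc 0 t) := by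
    apply ContinuousOn.mul
    · exact (Real.continuous_exp.comp (continuous_const.mul (continuous_const.sub continuous_id) : Continuous fun τ : ℝ => -gam * (t - τ))).continuousOn
    · apply hLLcont.rpow_const
      intro τ hτ
      rw [huIcc] at hτ
      exact Or.inl (ne_of_gt (LL_pos m (show EE m 0 < Tstar + τ by have := hτ.1; linarith)))
  have hfint : IntervalIntegrable (fun τ : ℝ => Real.exp (-gam * (t - τ)) * LL m (Tstar + τ) ^ (-lam)) MeasureTheory.volume 0 t := hfcont.intervalIntegrable
  have hecont : Continuous (fun τ : ℝ => Real.exp (-(gam / 2) * (t - τ))) :=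
    Real.continuous_exp.comp (continuous_const.mul (continuous_const.sub continuous_id) : Continuous fun τ : ℝ => -(gam / 2) * (t - τ))
  have hgcont : Continuous (fun τ : ℝ => K * a ^ (-lam) * Real.exp (-(gam / 2) * (t - τ))) :=
    continuous_const.mul hecont
  have hgint : IntervalIntegrable (fun τ : ℝ => K * a ^ (-lam) * Real.exp (-(gam / 2) * (t - τ))) MeasureTheory.volume 0 t := hgcont.intervalIntegrable 0 t
  have hmono := intervalIntegral.integral_mono_on ht hfint hgint hpt
  -- evaluate the majorant integral
  have hF : ∀ τ : ℝ, HasDerivAt (fun τ : ℝ => 2 / gam * Real.exp (-(gam / 2) * (t - τ)))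
      (Real.exp (-(gam / 2) * (t - τ))) τ := by
    intro τ
    have h2 : HasDerivAt (fun τ : ℝ => t - τ) (-1) τ := (hasDerivAt_id τ).const_sub t
    have h1 : HasDerivAt (fun τ : ℝ => -(gam / 2) * (t - τ)) (gam / 2) τ := by
      have := h2.const_mul (-(gam / 2))
      simpa using this
    have h3 := (h1.exp).const_mul (2 / gam)
    refine h3.congr_deriv ?_
    rw [mul_comm (Real.exp _), ← mul_assoc, div_mul_div_comm, mul_comm (2:ℝ) gam, div_self (by positivity), one_mul]
  have hFeval : (∫ τ in (0 : ℝ)..t, Real.exp (-(gam / 2) * (t - τ)))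
      = 2 / gam * Real.exp (-(gam / 2) * (t - t)) - 2 / gam * Real.exp (-(gam / 2) * (t - 0)) :=
    intervalIntegral.integral_eq_sub_of_hasDerivAt (fun τ _ => hF τ)
      (hecont.intervalIntegrable 0 t : IntervalIntegrable (fun τ : ℝ => Real.exp (-(gam / 2) * (t - τ))) MeasureTheory.volume 0 t)
  have hEint : (∫ τ in (0 : ℝ)..t, Real.exp (-(gam / 2) * (t - τ))) ≤ 2 / gam := by
    rw [hFeval, sub_self, mul_zero, Real.exp_zero, mul_one]
    have h8 : 0 < 2 / gam * Real.exp (-(gam / 2) * (t - 0)) :=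
      mul_pos (by positivity) (Real.exp_pos _)
    linarith
  have hgval : (∫ τ in (0 : ℝ)..t, K * a ^ (-lam) * Real.exp (-(gam / 2) * (t - τ)))
      = K * a ^ (-lam) * ∫ τ in (0 : ℝ)..t, Real.exp (-(gam / 2) * (t - τ)) :=
    intervalIntegral.integral_const_mul _ _
  have hka : 0 ≤ K * a ^ (-lam) := mul_nonneg hKpos.le (Real.rpow_nonneg ha0.le _)
  calc (∫ τ in (0:ℝ)..t, Real.exp (-gam * (t - τ)) * LL m (Tstar + τ) ^ (-lam))
      ≤ ∫ τ in (0:ℝ)..t, K * a ^ (-lam) * Real.exp (-(gam / 2) * (t - τ)) := hmono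
    _ = K * a ^ (-lam) * ∫ τ in (0:ℝ)..t, Real.exp (-(gam / 2) * (t - τ)) := hgval
    _ ≤ K * a ^ (-lam) * (2 / gam) := mul_le_mul_of_nonneg_left hEint hka
    _ = K * (2 / gam) * a ^ (-lam) := by ring
end
end
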